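/- arXiv:0804.4258 — 5 statements merged into one kernel-verified Lean document; each statement's English description precedes it below -/
import Mathlib

section
/- If 0 < q < 1, p > 0, r ≥ 0, p + q + r = 1 and r ≤ pq, then for all real z, (p + r e^{iz})/(1 - q e^{iz}) = exp( Σ_{k=1}^∞ (e^{ikz} - 1) · (q^k/k) · (1 - (-r/(pq))^k) ), and all the coefficients (q^k/k)(1 - (-r/(pq))^k) are nonnegative. -/
open Complex

/-- If `r ≤ pq` then `(p + r e^{iz})/(1 - q e^{iz})` admits the Lévy–Khintchine type
representation `exp(∑_{k≥1} (e^{ikz} - 1) (q^k/k)(1 - (-r/(pq))^k))`, with all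
coefficients nonnegative. -/
theorem rho_levy_khintchine (p q r : ℝ) (hq : 0 < q) (hq1 : q < 1) (hp : 0 < p)
    (hr : 0 ≤ r) (hsum : p + q + r = 1) (hrpq : r ≤ p * q) :
    (∀ k : ℕ, 1 ≤ k → 0 ≤ q ^ k / (k : ℝ) * (1 - (-(r / (p * q))) ^ k)) ∧
    ∀ z : ℝ,
      ((p : ℂ) + r * Complex.exp (Complex.I * z)) / (1 - q * Complex.exp (Complex.I * z)) =
      Complex.exp (∑' k : ℕ, (Complex.exp (Complex.I * (k : ℂ) * z) - 1) *
        ((q ^ k / (k : ℝ) * (1 - (-(r / (p * q))) ^ k) : ℝ) : ℂ)) := by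
  have hpq : 0 < p * q := mul_pos hp hq
  have ht0 : 0 ≤ r / (p * q) := div_nonneg hr hpq.le
  have ht1 : r / (p * q) ≤ 1 := (div_le_one hpq).mpr hrpq
  have hrp : r / p < 1 := by
    rw [div_lt_one hp]
    nlinarith
  have hrp0 : 0 ≤ r / p := div_nonneg hr hp.le
  constructor
  · intro k hk
    apply mul_nonneg
    · positivity
    · have habs : |(-(r / (p * q))) ^ k| ≤ 1 := by
        rw [_root_.abs_pow]
        exact pow_le_one₀ (abs_nonneg _) (by rwa [abs_neg, _root_.abs_of_nonneg ht0])
      linarith [(abs_le.mp habs).2]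
  · intro z
    set w : ℂ := Complex.exp (Complex.I * z) with hw
    have hwnorm : ‖w‖ = 1 := by
      rw [hw, Complex.norm_exp]
      simp [mul_comm]
    have hnq : ‖(q : ℂ)‖ < 1 := by
      rw [Complex.norm_real, Real.norm_eq_abs, abs_of_pos hq]; exact hq1
    have hnr : ‖(-(↑r / ↑p) : ℂ)‖ < 1 := by
      rw [norm_neg, norm_div, Complex.norm_real, Complex.norm_real, Real.norm_eq_abs,
        Real.norm_eq_abs, _root_.abs_of_nonneg hr, _root_.abs_of_pos hp]
      exact hrp
    have h1 : ‖(q : ℂ) * w‖ < 1 := by rw [norm_mul, hwnorm, mul_one]; exact hnq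
    have h2 : ‖(-(↑r / ↑p) : ℂ) * w‖ < 1 := by rw [norm_mul, hwnorm, mul_one]; exact hnr
    have S1 := hasSum_taylorSeries_neg_log h1
    have S2 := hasSum_taylorSeries_neg_log h2
    have S3 := hasSum_taylorSeries_neg_log hnq
    have S4 := hasSum_taylorSeries_neg_log hnr
    have Stot := ((S1.sub S2).sub (S3.sub S4))
    have hq0 : (q : ℂ) ≠ 0 := by exact_mod_cast hq.ne'
    have hp0 : (p : ℂ) ≠ 0 := by exact_mod_cast hp.ne'
    have hterm : ∀ k : ℕ,
        ((q : ℂ) * w) ^ k / k - ((-(↑r / ↑p) : ℂ) * w) ^ k / k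
          - ((q : ℂ) ^ k / k - (-(↑r / ↑p) : ℂ) ^ k / k)
        = (Complex.exp (Complex.I * (k : ℂ) * z) - 1) *
          ((q ^ k / (k : ℝ) * (1 - (-(r / (p * q))) ^ k) : ℝ) : ℂ) := by
      intro k
      have hwk : Complex.exp (Complex.I * (k : ℂ) * z) = w ^ k := by
        rw [hw, ← Complex.exp_nat_mul]; ring_nf
      rcases Nat.eq_zero_or_pos k with rfl | hk
      · simp
      rw [hwk]
      have h5 : (-(↑r / (↑p * ↑q)) : ℂ) ^ k * (q : ℂ) ^ k = (-(↑r / ↑p) : ℂ) ^ k := by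
        rw [← mul_pow]
        congr 1
        field_simp
      have hcoef : ((q ^ k / (k : ℝ) * (1 - (-(r / (p * q))) ^ k) : ℝ) : ℂ)
          = ((q : ℂ) ^ k - (-(↑r / ↑p) : ℂ) ^ k) / k := by
        push_cast
        rw [← h5]
        ring
      rw [hcoef, mul_pow, mul_pow]
      ring
    rw [show (fun k : ℕ => ((q : ℂ) * w) ^ k / k - ((-(↑r / ↑p) : ℂ) * w) ^ k / k
          - ((q : ℂ) ^ k / k - (-(↑r / ↑p) : ℂ) ^ k / k))
        = fun k : ℕ => (Complex.exp (Complex.I * (k : ℂ) * z) - 1) *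
          ((q ^ k / (k : ℝ) * (1 - (-(r / (p * q))) ^ k) : ℝ) : ℂ) from funext hterm] at Stot
    rw [Stot.tsum_eq]
    have hA : (1 : ℂ) - (q : ℂ) * w ≠ 0 := by
      intro h
      have h' : ‖(q : ℂ) * w‖ = 1 := by
        have : ((q : ℂ) * w) = 1 := by linear_combination -h
        rw [this, norm_one]
      linarith
    have hB : (1 : ℂ) - (-(↑r / ↑p) : ℂ) * w ≠ 0 := by
      intro h
      have h' : ‖(-(↑r / ↑p) : ℂ) * w‖ = 1 := by
        have : ((-(↑r / ↑p) : ℂ) * w) = 1 := by linear_combination -h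
        rw [this, norm_one]
      linarith
    have hC : (1 : ℂ) - (q : ℂ) ≠ 0 := by
      intro h
      have h' : ‖(q : ℂ)‖ = 1 := by
        have : ((q : ℂ)) = 1 := by linear_combination -h
        rw [this, norm_one]
      linarith
    have hD : (1 : ℂ) - (-(↑r / ↑p) : ℂ) ≠ 0 := by
      intro h
      have h' : ‖(-(↑r / ↑p) : ℂ)‖ = 1 := by
        have : ((-(↑r / ↑p) : ℂ)) = 1 := by linear_combination -h
        rw [this, norm_one]
      linarith
    rw [show -Complex.log (1 - (q : ℂ) * w) - -Complex.log (1 - (-(↑r / ↑p) : ℂ) * w)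
          - (-Complex.log (1 - (q : ℂ)) - -Complex.log (1 - (-(↑r / ↑p) : ℂ)))
        = Complex.log (1 - (-(↑r / ↑p) : ℂ) * w) + Complex.log (1 - (q : ℂ))
          - (Complex.log (1 - (q : ℂ) * w) + Complex.log (1 - (-(↑r / ↑p) : ℂ))) by ring]
    rw [Complex.exp_sub, Complex.exp_add, Complex.exp_add,
      Complex.exp_log hB, Complex.exp_log hC, Complex.exp_log hA, Complex.exp_log hD]
    have hsumC : (p : ℂ) + q + r = 1 := by exact_mod_cast hsum
    rw [div_eq_div_iff hA (mul_ne_zero hA hD)]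
    field_simp
    ring_nf
    linear_combination ((p:ℂ) - (p:ℂ) * w * (q:ℂ) + (r:ℂ) * w - (r:ℂ) * w ^ 2 * (q:ℂ)) * hsumC
end

section
/- Let p, q, r ≥ 0 with p + q + r = 1, 0 < q < 1, p > 0 and r > pq. Define p_0 = p, p_k = q^{k-1} r + q^k p for k ≥ 1, and define q_1, q_2 by the Katti recursion n p_n = Σ_{k=1}^n k q_k p_{n-k} (n = 1, 2). Then q_2 = (1 + r/q)(1-q) q^2 [1 - q - (r/q)(1+q)] / (2 p^2) < 0; consequently ρ_{q,r} = Σ_k p_k δ_k is not infinitely divisible. -/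
open MeasureTheory Complex

noncomputable def rhoMeasure (p q r : ℝ) : Measure ℝ :=
  Measure.sum (fun k : ℕ =>
    ENNReal.ofReal (if k = 0 then p else q ^ (k - 1) * r + q ^ k * p) • Measure.dirac (k : ℝ))

noncomputable def convPow (μ : Measure ℝ) : ℕ → Measure ℝ
  | 0 => Measure.dirac 0
  | n + 1 => (convPow μ n).conv μ

/-- A probability measure is infinitely divisible if for every `n ≥ 1` it is the
`n`-fold convolution of some probability measure. -/
def InfinitelyDivisible (μ : Measure ℝ) : Prop :=
  ∀ n : ℕ, 0 < n → ∃ ν : Measure ℝ, IsProbabilityMeasure ν ∧ μ = convPow ν n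

noncomputable def charFun (μ : Measure ℝ) (z : ℝ) : ℂ :=
  ∫ x, Complex.exp (Complex.I * z * x) ∂μ

open Set ENNReal

section Helpers

set_option linter.unusedSectionVars false

/-! ### Generic convolution lemmas -/

lemma conv_apply' (μ ν : Measure ℝ) [SFinite μ] [SFinite ν] {A : Set ℝ} (hA : MeasurableSet A) :
    (μ.conv ν) A = ∫⁻ x, ν {y | x + y ∈ A} ∂μ := by
  rw [Measure.conv, Measure.map_apply measurable_add hA,
    Measure.prod_apply (measurable_add hA)]
  rfl

lemma conv_atom_le (μ ν : Measure ℝ) [SFinite μ] [SFinite ν] {A : Set ℝ}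
    (hA : MeasurableSet A) : μ {0} * ν A ≤ (μ.conv ν) A := by
  rw [conv_apply' μ ν hA]
  calc μ {0} * ν A = ∫⁻ x, Set.indicator {0} (fun _ => ν A) x ∂μ := by
        rw [lintegral_indicator (measurableSet_singleton 0), setLIntegral_const, mul_comm]
    _ ≤ _ := by
        refine lintegral_mono fun x => ?_
        rcases eq_or_ne x 0 with rfl | hx
        · simp
        · rw [Set.indicator_of_notMem (by simpa using hx)]
          exact zero_le

lemma conv_Iio_null (μ ν : Measure ℝ) [SFinite μ] [SFinite ν] {s t : ℝ}
    (hμ : μ (Iio s) = 0) (hν : ν (Iio t) = 0) : (μ.conv ν) (Iio (s + t)) = 0 := by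
  rw [conv_apply' μ ν measurableSet_Iio]
  have h : (fun x => ν {y | x + y ∈ Iio (s + t)}) =ᵐ[μ] (fun _ => 0) := by
    filter_upwards [measure_eq_zero_iff_ae_notMem.mp hμ] with x hx
    refine measure_mono_null (fun y hy => ?_) hν
    simp only [Set.mem_setOf_eq, Set.mem_Iio] at hy ⊢
    simp only [Set.mem_Iio, not_lt] at hx
    linarith
  rw [lintegral_congr_ae h, lintegral_zero]

lemma conv_Iio_lb (μ ν : Measure ℝ) [SFinite μ] [SFinite ν] (s t : ℝ) :
    μ (Iio s) * ν (Iio t) ≤ (μ.conv ν) (Iio (s + t)) := by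
  rw [conv_apply' μ ν measurableSet_Iio]
  calc μ (Iio s) * ν (Iio t) = ∫⁻ x, Set.indicator (Iio s) (fun _ => ν (Iio t)) x ∂μ := by
        rw [lintegral_indicator measurableSet_Iio, setLIntegral_const, mul_comm]
    _ ≤ _ := by
        refine lintegral_mono fun x => ?_
        by_cases hx : x ∈ Iio s
        · rw [Set.indicator_of_mem hx]
          refine measure_mono fun y hy => ?_
          simp only [Set.mem_Iio] at hy hx
          simp only [Set.mem_setOf_eq, Set.mem_Iio]
          linarith
        · rw [Set.indicator_of_notMem hx]; exact zero_le

lemma conv_concentrated (μ ν : Measure ℝ) [SFinite μ] [SFinite ν] {T : Set ℝ}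
    (hT : MeasurableSet T) (hadd : ∀ x ∈ T, ∀ y ∈ T, x + y ∈ T)
    (hμ : μ Tᶜ = 0) (hν : ν Tᶜ = 0) : (μ.conv ν) Tᶜ = 0 := by
  rw [conv_apply' μ ν hT.compl]
  have h : (fun x => ν {y | x + y ∈ Tᶜ}) =ᵐ[μ] (fun _ => 0) := by
    filter_upwards [measure_eq_zero_iff_ae_notMem.mp hμ] with x hx
    rw [Set.notMem_compl_iff] at hx
    refine measure_mono_null (fun y hy => ?_) hν
    simp only [Set.mem_setOf_eq, Set.mem_compl_iff] at hy ⊢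
    exact fun hyT => hy (hadd x hx y hyT)
  rw [lintegral_congr_ae h, lintegral_zero]

/-! ### The set `{0, 1} ∪ [2, ∞)` -/

def Tset : Set ℝ := {0, 1} ∪ Ici 2

lemma Tset_cases {x : ℝ} (hx : x ∈ Tset) : x = 0 ∨ x = 1 ∨ 2 ≤ x := by
  rcases hx with (h | h) | h
  exacts [Or.inl h, Or.inr (Or.inl h), Or.inr (Or.inr h)]

lemma Tset_nonneg {x : ℝ} (hx : x ∈ Tset) : 0 ≤ x := by
  rcases Tset_cases hx with rfl | rfl | h <;> norm_num; linarith

lemma neg_not_mem_Tset {y : ℝ} (hy : y < 0) : y ∉ Tset :=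
  fun h => absurd (Tset_nonneg h) (by linarith)

lemma Tset_meas : MeasurableSet Tset :=
  (((measurableSet_singleton (1:ℝ)).insert 0)).union measurableSet_Ici

lemma Tset_add {x : ℝ} (hx : x ∈ Tset) {y : ℝ} (hy : y ∈ Tset) : x + y ∈ Tset := by
  rcases Tset_cases hx with rfl | rfl | h
  · simpa using hy
  · rcases Tset_cases hy with rfl | rfl | h'
    · simp [Tset]
    · norm_num [Tset]
    · exact Or.inr (by simp only [Set.mem_Ici]; linarith)
  · exact Or.inr (by simp only [Set.mem_Ici]; linarith [Tset_nonneg hy])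

lemma slice_singleton (x c : ℝ) : {y : ℝ | x + y ∈ ({c} : Set ℝ)} = {c - x} := by
  ext y; simp only [Set.mem_setOf_eq, Set.mem_singleton_iff]
  constructor <;> intro h <;> linarith

/-! ### Atom lemmas for convolutions concentrated on `Tset` -/

variable {μ ν : Measure ℝ} [SFinite μ] [SFinite ν]

lemma slice_null (hν : ν Tsetᶜ = 0) {x c : ℝ} (hcx : c - x < 0) :
    ν {y | x + y ∈ ({c} : Set ℝ)} = 0 := by
  rw [slice_singleton]
  exact measure_mono_null (fun y hy => by
    simp only [Set.mem_singleton_iff] at hy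
    subst hy
    exact neg_not_mem_Tset hcx) hν

lemma slice_null' (hν : ν (Iio 0) = 0) {x c : ℝ} (hcx : c - x < 0) :
    ν {y | x + y ∈ ({c} : Set ℝ)} = 0 := by
  rw [slice_singleton]
  exact measure_mono_null (fun y hy => by
    simp only [Set.mem_singleton_iff] at hy
    subst hy
    simpa using hcx) hν

lemma conv_atom_zero_half (hμ : μ (Iio 0) = 0) (hν : ν (Iio 0) = 0) :
    (μ.conv ν) {0} = μ {0} * ν {0} := by
  rw [conv_apply' μ ν (measurableSet_singleton 0)]
  have h : (fun x => ν {y | x + y ∈ ({0} : Set ℝ)}) =ᵐ[μ]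
      Set.indicator {0} (fun _ => ν {0}) := by
    filter_upwards [measure_eq_zero_iff_ae_notMem.mp hμ] with x hx
    simp only [Set.mem_Iio, not_lt] at hx
    rcases eq_or_lt_of_le hx with rfl | hpos
    · rw [Set.indicator_of_mem (Set.mem_singleton _), slice_singleton]; norm_num
    · rw [Set.indicator_of_notMem (by simpa using hpos.ne'),
        slice_null' hν (by linarith)]
  rw [lintegral_congr_ae h, lintegral_indicator (measurableSet_singleton 0),
    setLIntegral_const, mul_comm]

lemma conv_atom_zero (hμ : μ Tsetᶜ = 0) (hν : ν Tsetᶜ = 0) :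
    (μ.conv ν) {0} = μ {0} * ν {0} := by
  rw [conv_apply' μ ν (measurableSet_singleton 0)]
  have h : (fun x => ν {y | x + y ∈ ({0} : Set ℝ)}) =ᵐ[μ]
      Set.indicator {0} (fun _ => ν {0}) := by
    filter_upwards [measure_eq_zero_iff_ae_notMem.mp hμ] with x hx
    rw [Set.notMem_compl_iff] at hx
    rcases Tset_cases hx with rfl | rfl | h2
    · rw [Set.indicator_of_mem (Set.mem_singleton _), slice_singleton]; norm_num
    · rw [Set.indicator_of_notMem (by norm_num), slice_null hν (by norm_num)]
    · rw [Set.indicator_of_notMem (by intro h; simp only [Set.mem_singleton_iff] at h; linarith),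
        slice_null hν (by linarith)]
  rw [lintegral_congr_ae h, lintegral_indicator (measurableSet_singleton 0),
    setLIntegral_const, mul_comm]

lemma conv_atom_one (hμ : μ Tsetᶜ = 0) (hν : ν Tsetᶜ = 0) :
    (μ.conv ν) {1} = μ {0} * ν {1} + μ {1} * ν {0} := by
  rw [conv_apply' μ ν (measurableSet_singleton 1)]
  have h : (fun x => ν {y | x + y ∈ ({1} : Set ℝ)}) =ᵐ[μ]
      (fun x => Set.indicator {0} (fun _ => ν {1}) x + Set.indicator {1} (fun _ => ν {0}) x) := by
    filter_upwards [measure_eq_zero_iff_ae_notMem.mp hμ] with x hx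
    rw [Set.notMem_compl_iff] at hx
    rcases Tset_cases hx with rfl | rfl | h2
    · rw [Set.indicator_of_mem (Set.mem_singleton _), Set.indicator_of_notMem (by norm_num),
        slice_singleton]
      norm_num
    · rw [Set.indicator_of_notMem (by norm_num), Set.indicator_of_mem (Set.mem_singleton _),
        slice_singleton]
      norm_num
    · rw [Set.indicator_of_notMem (by intro h; simp only [Set.mem_singleton_iff] at h; linarith),
        Set.indicator_of_notMem (by intro h; simp only [Set.mem_singleton_iff] at h; linarith),
        slice_null hν (by linarith)]
      simp
  rw [lintegral_congr_ae h,
    lintegral_add_left ((measurable_const.indicator (measurableSet_singleton 0))),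
    lintegral_indicator (measurableSet_singleton 0),
    lintegral_indicator (measurableSet_singleton 1),
    setLIntegral_const, setLIntegral_const, mul_comm (ν {1}), mul_comm (ν {0})]

lemma conv_atom_two_ge :
    μ {1} * ν {1} + μ {2} * ν {0} ≤ (μ.conv ν) {2} := by
  rw [conv_apply' μ ν (measurableSet_singleton 2)]
  have : μ {1} * ν {1} + μ {2} * ν {0} =
      ∫⁻ x, (Set.indicator {1} (fun _ => ν {1}) x + Set.indicator {2} (fun _ => ν {0}) x) ∂μ := by
    rw [lintegral_add_left ((measurable_const.indicator (measurableSet_singleton 1))),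
      lintegral_indicator (measurableSet_singleton 1),
      lintegral_indicator (measurableSet_singleton 2),
      setLIntegral_const, setLIntegral_const, mul_comm (ν {1}), mul_comm (ν {0})]
  rw [this]
  refine lintegral_mono fun x => ?_
  rcases eq_or_ne x 1 with rfl | hx1
  · rw [Set.indicator_of_mem (Set.mem_singleton _), Set.indicator_of_notMem (by norm_num),
      slice_singleton]
    norm_num
  rcases eq_or_ne x 2 with rfl | hx2
  · rw [Set.indicator_of_notMem (by norm_num), Set.indicator_of_mem (Set.mem_singleton _),
      slice_singleton]
    norm_num
  · rw [Set.indicator_of_notMem (by simpa using hx1),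
      Set.indicator_of_notMem (by simpa using hx2)]
    simp

end Helpers

section ConvPowHelpers

set_option linter.unusedSectionVars false

lemma convPow_prob (ν : Measure ℝ) [IsProbabilityMeasure ν] :
    ∀ k, IsProbabilityMeasure (convPow ν k)
  | 0 => by unfold convPow; infer_instance
  | k + 1 => by
      have := convPow_prob ν k
      unfold convPow
      infer_instance

variable {ν : Measure ℝ} [IsProbabilityMeasure ν]

lemma convPow_Iio_lb (ν : Measure ℝ) [IsProbabilityMeasure ν] (s : ℝ) :
    ∀ k : ℕ, ν (Iio s) ^ (k + 1) ≤ convPow ν (k + 1) (Iio ((k + 1) * s))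
  | 0 => by
      show _ ≤ ((convPow ν 0).conv ν) _
      unfold convPow
      simp
  | k + 1 => by
      haveI := convPow_prob ν (k + 1)
      show _ ≤ ((convPow ν (k + 1)).conv ν) _
      rw [show (((k + 1 : ℕ) : ℝ) + 1) * s = (((k : ℕ) : ℝ) + 1) * s + s by push_cast; ring]
      calc ν (Iio s) ^ (k + 1 + 1) = ν (Iio s) ^ (k + 1) * ν (Iio s) := by rw [pow_succ]
        _ ≤ convPow ν (k + 1) (Iio (((k:ℕ) + 1) * s)) * ν (Iio s) :=
            mul_le_mul_left (convPow_Iio_lb ν s k) _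
        _ ≤ _ := by
            have := conv_Iio_lb (convPow ν (k + 1)) ν (((k:ℕ) + 1) * s) s
            push_cast at this ⊢
            exact this

lemma convPow_Iio_null (ν : Measure ℝ) [IsProbabilityMeasure ν] {s : ℝ} (hs : ν (Iio s) = 0) :
    ∀ k : ℕ, convPow ν k (Iio (k * s)) = 0
  | 0 => by
      show Measure.dirac 0 _ = 0
      rw [Measure.dirac_apply' _ measurableSet_Iio]
      norm_num
  | k + 1 => by
      haveI := convPow_prob ν k
      show ((convPow ν k).conv ν) _ = 0
      rw [show (((k + 1 : ℕ) : ℝ)) * s = ((k : ℕ) : ℝ) * s + s by push_cast; ring]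
      exact conv_Iio_null _ _ (convPow_Iio_null ν hs k) hs

lemma nu_Iio_zero (ν : Measure ℝ) [IsProbabilityMeasure ν] {n : ℕ} (hn : 0 < n)
    (h0 : convPow ν n (Iio 0) = 0) (hatom : convPow ν n {0} ≠ 0) : ν (Iio 0) = 0 := by
  obtain ⟨k, rfl⟩ : ∃ k, n = k + 1 := ⟨n - 1, (Nat.succ_pred_eq_of_pos hn).symm⟩
  set n := k + 1 with hn_def
  set A : Set ℝ := {x | ν (Iio x) = 0} with hA_def
  have hsub : ∀ {x x' : ℝ}, x' ≤ x → x ∈ A → x' ∈ A := fun h hx =>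
    measure_mono_null (Iio_subset_Iio h) hx
  have hlbn : ∀ s : ℝ, ν (Iio s) ^ n ≤ convPow ν n (Iio (n * s)) := fun s => by
    have := convPow_Iio_lb ν s k; rw [hn_def]; push_cast at this ⊢; exact this
  have hAne : A.Nonempty := by
    by_contra hA
    have h1 : ν (Iio (-1)) ≠ 0 := fun h => hA ⟨-1, h⟩
    have h2 : convPow ν n (Iio ((n : ℝ) * (-1))) = 0 :=
      measure_mono_null (Iio_subset_Iio (by nlinarith [Nat.cast_nonneg (α := ℝ) n])) h0
    have h3 := hlbn (-1)
    rw [h2] at h3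
    exact pow_ne_zero n h1 (le_antisymm h3 zero_le)
  have hAbdd : BddAbove A := by
    obtain ⟨M, hM⟩ : ∃ M : ℝ, ν (Iio M) ≠ 0 := by
      by_contra hM
      push_neg at hM
      have huniv : (⋃ j : ℕ, Iio ((j : ℝ))) = Set.univ := by
        ext x
        simp only [Set.mem_iUnion, Set.mem_Iio, Set.mem_univ, iff_true]
        exact exists_nat_gt x
      have := measure_iUnion_null (fun j : ℕ => hM (j : ℝ))
      rw [huniv, measure_univ] at this
      exact one_ne_zero this
    refine ⟨M, fun x hx => ?_⟩
    by_contra hxM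
    push_neg at hxM
    exact hM (hsub hxM.le hx)
  set m := sSup A with hm_def
  have hm0 : ν (Iio m) = 0 := by
    have hcover : Iio m = ⋃ j : ℕ, Iio (m - 1 / (j + 1)) := by
      ext x
      simp only [Set.mem_iUnion, Set.mem_Iio]
      constructor
      · intro hx
        obtain ⟨j, hj⟩ := exists_nat_one_div_lt (show (0:ℝ) < m - x by linarith)
        exact ⟨j, by linarith⟩
      · rintro ⟨j, hj⟩
        have : (0:ℝ) < 1 / (j + 1) := by positivity
        linarith
    rw [hcover]
    refine measure_iUnion_null fun j => ?_
    have hlt : m - 1 / (j + 1) < m := by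
      have : (0:ℝ) < 1 / (j + 1) := by positivity
      linarith
    obtain ⟨a, haA, ha⟩ := exists_lt_of_lt_csSup hAne hlt
    exact hsub ha.le haA
  have hm_nonneg : 0 ≤ m := by
    by_contra hmn
    push_neg at hmn
    have hhalf : ν (Iio (m / 2)) ≠ 0 := by
      intro h
      have : m / 2 ≤ m := le_csSup hAbdd h
      linarith
    have h2 : convPow ν n (Iio ((n : ℝ) * (m / 2))) = 0 := by
      refine measure_mono_null (Iio_subset_Iio ?_) h0
      have h1n : (1:ℝ) ≤ (n:ℝ) := by exact_mod_cast hn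
      nlinarith
    have h3 := hlbn (m / 2)
    rw [h2] at h3
    exact pow_ne_zero n hhalf (le_antisymm h3 zero_le)
  have hm_le : ¬ 0 < m := by
    intro hmp
    have h2 := convPow_Iio_null ν hm0 n
    have h3 : convPow ν n {0} = 0 := by
      refine measure_mono_null (fun x hx => ?_) h2
      simp only [Set.mem_singleton_iff] at hx
      subst hx
      simp only [Set.mem_Iio]
      have h1n : (1:ℝ) ≤ (n:ℝ) := by exact_mod_cast hn
      nlinarith
    exact hatom h3
  have : m = 0 := le_antisymm (not_lt.mp hm_le) hm_nonneg
  rw [← this]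
  exact hm0

lemma convPow_atom_zero_half (hν : ν (Iio 0) = 0) : ∀ k, convPow ν k {0} = ν {0} ^ k
  | 0 => by
      show Measure.dirac 0 {0} = _
      rw [pow_zero]
      simp
  | k + 1 => by
      haveI := convPow_prob ν k
      show ((convPow ν k).conv ν) _ = _
      have hk0 : convPow ν k (Iio 0) = 0 := by
        have := convPow_Iio_null ν hν k
        rwa [mul_zero] at this
      rw [conv_atom_zero_half hk0 hν, convPow_atom_zero_half hν k, pow_succ]

lemma convPow_conc (hT : ν Tsetᶜ = 0) : ∀ k, convPow ν k Tsetᶜ = 0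
  | 0 => by
      show Measure.dirac 0 _ = 0
      rw [Measure.dirac_apply' _ Tset_meas.compl]
      have : (0:ℝ) ∈ Tset := by simp [Tset]
      simp [this]
  | k + 1 => by
      haveI := convPow_prob ν k
      exact conv_concentrated _ _ Tset_meas (fun x hx y hy => Tset_add hx hy)
        (convPow_conc hT k) hT

lemma convPow_atom_zero (hT : ν Tsetᶜ = 0) : ∀ k, convPow ν k {0} = ν {0} ^ k
  | 0 => by
      show Measure.dirac 0 {0} = _
      rw [pow_zero]
      simp
  | k + 1 => by
      haveI := convPow_prob ν k
      show ((convPow ν k).conv ν) _ = _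
      rw [conv_atom_zero (convPow_conc hT k) hT, convPow_atom_zero hT k, pow_succ]

lemma convPow_atom_one (hT : ν Tsetᶜ = 0) :
    ∀ k : ℕ, convPow ν k {1} = k * ν {0} ^ (k - 1) * ν {1}
  | 0 => by
      show Measure.dirac 0 {1} = _
      rw [Measure.dirac_apply' _ (measurableSet_singleton 1)]
      norm_num
  | k + 1 => by
      haveI := convPow_prob ν k
      show ((convPow ν k).conv ν) _ = _
      rw [conv_atom_one (convPow_conc hT k) hT, convPow_atom_zero hT k,
        convPow_atom_one hT k]
      rcases k with _ | j
      · simp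
      · push_cast
        rw [pow_succ]
        ring

lemma convPow_atom_two (hT : ν Tsetᶜ = 0) :
    ∀ k : ℕ, (k.choose 2 : ℝ≥0∞) * ν {0} ^ (k - 2) * ν {1} ^ 2 ≤ convPow ν k {2}
  | 0 => by simp
  | k + 1 => by
      haveI := convPow_prob ν k
      have step := conv_atom_two_ge (μ := convPow ν k) (ν := ν)
      rw [convPow_atom_one hT k] at step
      have h1 : (k : ℝ≥0∞) * ν {0} ^ (k - 1) * ν {1} * ν {1}
            + ((k.choose 2 : ℝ≥0∞) * ν {0} ^ (k - 2) * ν {1} ^ 2) * ν {0}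
          ≤ (k : ℝ≥0∞) * ν {0} ^ (k - 1) * ν {1} * ν {1} + convPow ν k {2} * ν {0} :=
        add_le_add_right (mul_le_mul_left (convPow_atom_two hT k) _) _
      have h2 : ((k+1).choose 2 : ℝ≥0∞) * ν {0} ^ (k + 1 - 2) * ν {1} ^ 2
          ≤ (k : ℝ≥0∞) * ν {0} ^ (k - 1) * ν {1} * ν {1}
            + ((k.choose 2 : ℝ≥0∞) * ν {0} ^ (k - 2) * ν {1} ^ 2) * ν {0} := by
        rcases k with _ | j
        · simp
        rcases j with _ | i
        · norm_num [pow_two]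
        · rw [Nat.choose_succ_succ (i + 2) 1]
          push_cast [Nat.choose_one_right]
          rw [pow_succ (ν {0}) i]
          apply le_of_eq
          ring
      exact le_trans h2 (le_trans h1 step)

end ConvPowHelpers

section RhoHelpers

lemma rho_apply (p q r : ℝ) {A : Set ℝ} (hA : MeasurableSet A) :
    rhoMeasure p q r A = ∑' k : ℕ,
      ENNReal.ofReal (if k = 0 then p else q ^ (k - 1) * r + q ^ k * p) * A.indicator 1 (k : ℝ) := by
  rw [rhoMeasure, Measure.sum_apply _ hA]
  refine tsum_congr fun k => ?_
  rw [Measure.smul_apply, smul_eq_mul, Measure.dirac_apply' _ hA]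

lemma rho_atom (p q r : ℝ) (j : ℕ) :
    rhoMeasure p q r {(j : ℝ)} =
      ENNReal.ofReal (if j = 0 then p else q ^ (j - 1) * r + q ^ j * p) := by
  rw [rho_apply p q r (measurableSet_singleton _)]
  rw [tsum_eq_single j]
  · rw [Set.indicator_of_mem (Set.mem_singleton _), Pi.one_apply, mul_one]
  · intro k hk
    rw [Set.indicator_of_notMem (by simpa [Nat.cast_injective.eq_iff] using hk), mul_zero]

lemma rho_null {p q r : ℝ} {A : Set ℝ} (hA : MeasurableSet A) (h : ∀ k : ℕ, (k : ℝ) ∉ A) :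
    rhoMeasure p q r A = 0 := by
  rw [rho_apply p q r hA]
  simp only [Set.indicator_of_notMem (h _), mul_zero, tsum_zero]

lemma rho_atom_zero (p q r : ℝ) : rhoMeasure p q r {(0:ℝ)} = ENNReal.ofReal p := by
  have := rho_atom p q r 0; norm_num at this; exact this

lemma rho_atom_one (p q r : ℝ) : rhoMeasure p q r {(1:ℝ)} = ENNReal.ofReal (r + q * p) := by
  have := rho_atom p q r 1; norm_num at this; convert this using 3

lemma rho_atom_two (p q r : ℝ) :
    rhoMeasure p q r {(2:ℝ)} = ENNReal.ofReal (q * r + q ^ 2 * p) := by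
  have := rho_atom p q r 2; norm_num at this; convert this using 3

lemma rho_Iio (p q r : ℝ) : rhoMeasure p q r (Iio 0) = 0 :=
  rho_null measurableSet_Iio (fun k => by simp [Nat.cast_nonneg])

lemma rho_Ioo01 (p q r : ℝ) : rhoMeasure p q r (Ioo 0 1) = 0 := by
  refine rho_null measurableSet_Ioo (fun k => ?_)
  simp only [Set.mem_Ioo, not_and, not_lt]
  intro hk
  exact_mod_cast Nat.one_le_cast.mpr
    (by exact_mod_cast Nat.pos_of_ne_zero (by rintro rfl; norm_num at hk))

lemma rho_Ioo12 (p q r : ℝ) : rhoMeasure p q r (Ioo 1 2) = 0 := by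
  refine rho_null measurableSet_Ioo (fun k => ?_)
  simp only [Set.mem_Ioo, not_and, not_lt]
  intro hk
  have : 2 ≤ k := by
    by_contra h
    interval_cases k <;> norm_num at hk
  exact_mod_cast this

end RhoHelpers

lemma two_mul_choose_two (n : ℕ) : 2 * n.choose 2 = n * (n - 1) := by
  induction n with
  | zero => rfl
  | succ m ih =>
    rw [Nat.choose_succ_succ m 1, Nat.choose_one_right, Nat.mul_add, ih, Nat.succ_sub_one]
    cases m with
    | zero => rfl
    | succ j => rw [Nat.succ_sub_one]; ring

/-- Katti recursion for `ρ_{q,r}` when `r > pq`: with `p₀ = p`, `p₁ = r + qp`,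
`p₂ = qr + q²p`, `q₁ = p₁/p₀` and `q₂ = (2p₂ - q₁p₁)/(2p₀)`, one has
`q₂ = (1 + r/q)(1-q)q²[1 - q - (r/q)(1+q)]/(2p²) < 0`, and consequently
`ρ_{q,r}` is not infinitely divisible. -/
theorem rho_not_infinitely_divisible (p q r : ℝ) (hq : 0 < q) (hq1 : q < 1) (hp : 0 < p)
    (hr : 0 ≤ r) (hsum : p + q + r = 1) (hrpq : p * q < r) :
    (2 * (q * r + q ^ 2 * p) - (r + q * p) / p * (r + q * p)) / (2 * p) =
      (1 + r / q) * (1 - q) * q ^ 2 * (1 - q - r / q * (1 + q)) / (2 * p ^ 2) ∧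
    (2 * (q * r + q ^ 2 * p) - (r + q * p) / p * (r + q * p)) / (2 * p) < 0 ∧
    ¬ InfinitelyDivisible (rhoMeasure p q r) := by
  have hp1 : 0 < r + q * p := by nlinarith
  have hd : 0 < (r + q * p) * (r - p * q) := mul_pos hp1 (by nlinarith)
  refine ⟨?_, ?_, ?_⟩
  · have hr' : r = 1 - p - q := by linarith
    subst hr'
    field_simp
    ring
  · have hnum : 2 * (q * r + q ^ 2 * p) - (r + q * p) / p * (r + q * p) < 0 := by
      rw [sub_neg]
      rw [div_mul_eq_mul_div, lt_div_iff₀ hp]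
      nlinarith
    exact div_neg_of_neg_of_pos hnum (by linarith)
  · intro hID
    set p1 : ℝ := r + q * p with hp1_def
    set p2 : ℝ := q * r + q ^ 2 * p with hp2_def
    set d : ℝ := p1 * (r - p * q) with hd_def
    set N : ℕ := max 2 (Nat.ceil (p1 ^ 2 / d) + 1) with hN_def
    have hN2 : 2 ≤ N := le_max_left _ _
    have hNpos : 0 < N := by omega
    have hNgt : p1 ^ 2 < N * d := by
      rw [← div_lt_iff₀ hd]
      refine lt_of_le_of_lt (Nat.le_ceil _) ?_
      have : (Nat.ceil (p1 ^ 2 / d) + 1 : ℕ) ≤ N := le_max_right _ _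
      exact_mod_cast Nat.lt_of_lt_of_le (Nat.lt_succ_self _) this
    obtain ⟨ν, hν, hμeq⟩ := hID N hNpos
    haveI := hν
    -- atoms and null sets of convPow ν N
    have e0 : convPow ν N {(0:ℝ)} = ENNReal.ofReal p := by rw [← hμeq]; exact rho_atom_zero p q r
    have e1 : convPow ν N {(1:ℝ)} = ENNReal.ofReal p1 := by rw [← hμeq]; exact rho_atom_one p q r
    have e2 : convPow ν N {(2:ℝ)} = ENNReal.ofReal p2 := by rw [← hμeq]; exact rho_atom_two p q r
    have nIio : convPow ν N (Iio 0) = 0 := by rw [← hμeq]; exact rho_Iio p q r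
    have n01 : convPow ν N (Ioo 0 1) = 0 := by rw [← hμeq]; exact rho_Ioo01 p q r
    have n12 : convPow ν N (Ioo 1 2) = 0 := by rw [← hμeq]; exact rho_Ioo12 p q r
    have hatomne : convPow ν N {(0:ℝ)} ≠ 0 := by
      rw [e0]
      exact (ENNReal.ofReal_pos.mpr hp).ne'
    -- ν lives on [0, ∞)
    have hνIio : ν (Iio 0) = 0 := nu_Iio_zero ν hNpos nIio hatomne
    -- the atom of ν at 0 is positive
    have ha0 : convPow ν N {(0:ℝ)} = ν {0} ^ N := convPow_atom_zero_half hνIio N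
    have hane : ν {0} ≠ 0 := by
      intro h
      rw [ha0, h, zero_pow hNpos.ne'] at hatomne
      exact hatomne rfl
    obtain ⟨K, hK⟩ : ∃ K, N = K + 1 := ⟨N - 1, (Nat.succ_pred_eq_of_pos hNpos).symm⟩
    haveI := convPow_prob ν K
    have hKatom : convPow ν K {(0:ℝ)} ≠ 0 := by
      rw [convPow_atom_zero_half hνIio K]
      exact pow_ne_zero K hane
    -- ν gives no mass to (0,1) and (1,2)
    have hν01 : ν (Ioo 0 1) = 0 := by
      have hle := conv_atom_le (convPow ν K) ν (measurableSet_Ioo (a := (0:ℝ)) (b := 1))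
      have : ((convPow ν K).conv ν) (Ioo 0 1) = 0 := by
        rw [show (convPow ν K).conv ν = convPow ν N by rw [hK]; rfl]
        exact n01
      rw [this, le_zero_iff, mul_eq_zero] at hle
      exact hle.resolve_left hKatom
    have hν12 : ν (Ioo 1 2) = 0 := by
      have hle := conv_atom_le (convPow ν K) ν (measurableSet_Ioo (a := (1:ℝ)) (b := 2))
      have : ((convPow ν K).conv ν) (Ioo 1 2) = 0 := by
        rw [show (convPow ν K).conv ν = convPow ν N by rw [hK]; rfl]
        exact n12
      rw [this, le_zero_iff, mul_eq_zero] at hle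
      exact hle.resolve_left hKatom
    -- ν is concentrated on Tset
    have hT : ν Tsetᶜ = 0 := by
      refine measure_mono_null (fun x hx => ?_)
        (measure_union_null hνIio (measure_union_null hν01 hν12))
      simp only [Set.mem_compl_iff, Tset, Set.mem_union, Set.mem_insert_iff,
        Set.mem_singleton_iff, Set.mem_Ici, not_or, not_le] at hx
      obtain ⟨⟨hx0, hx1⟩, hx2⟩ := hx
      simp only [Set.mem_union, Set.mem_Iio, Set.mem_Ioo]
      rcases lt_trichotomy x 0 with h | h | h
      · exact Or.inl h
      · exact absurd h hx0
      rcases lt_trichotomy x 1 with h1 | h1 | h1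
      · exact Or.inr (Or.inl ⟨h, h1⟩)
      · exact absurd h1 hx1
      · exact Or.inr (Or.inr ⟨h1, hx2⟩)
    -- translate atoms to real numbers
    set a : ℝ≥0∞ := ν {0} with ha_def
    set b : ℝ≥0∞ := ν {1} with hb_def
    set A : ℝ := a.toReal with hA_def
    set B : ℝ := b.toReal with hB_def
    have haf : a ≠ ⊤ := measure_ne_top ν _
    have hbf : b ≠ ⊤ := measure_ne_top ν _
    have hA0 : 0 ≤ A := ENNReal.toReal_nonneg
    have hB0 : 0 ≤ B := ENNReal.toReal_nonneg
    have hPA : p = A ^ N := by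
      have := congrArg ENNReal.toReal (e0.symm.trans (convPow_atom_zero hT N))
      rwa [ENNReal.toReal_ofReal hp.le, ENNReal.toReal_pow] at this
    have hPB : p1 = N * A ^ (N - 1) * B := by
      have := congrArg ENNReal.toReal (e1.symm.trans (convPow_atom_one hT N))
      rwa [ENNReal.toReal_ofReal hp1.le, ENNReal.toReal_mul, ENNReal.toReal_mul,
        ENNReal.toReal_natCast, ENNReal.toReal_pow] at this
    have hPC : (N.choose 2 : ℝ) * A ^ (N - 2) * B ^ 2 ≤ p2 := by
      have h := convPow_atom_two hT N
      rw [e2] at h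
      have := ENNReal.toReal_mono ENNReal.ofReal_ne_top h
      rwa [ENNReal.toReal_ofReal (by nlinarith : (0:ℝ) ≤ p2), ENNReal.toReal_mul,
        ENNReal.toReal_mul, ENNReal.toReal_natCast, ENNReal.toReal_pow,
        ENNReal.toReal_pow] at this
    -- final arithmetic contradiction
    have hchoose : (2 : ℝ) * (N.choose 2 : ℝ) = (N : ℝ) * ((N : ℝ) - 1) := by
      have := two_mul_choose_two N
      have h1 : ((2 * N.choose 2 : ℕ) : ℝ) = ((N * (N - 1) : ℕ) : ℝ) := by exact_mod_cast this
      push_cast [Nat.cast_sub (show 1 ≤ N by omega)] at h1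
      linarith
    have hpow : A ^ (N - 1) * A ^ (N - 1) = A ^ N * A ^ (N - 2) := by
      rw [← pow_add, ← pow_add]
      congr 1
      omega
    have hP1sq : p1 ^ 2 = (N : ℝ) ^ 2 * (A ^ (N - 1) * A ^ (N - 1) * B ^ 2) := by
      rw [hPB]; ring
    have h2pp2 : (N : ℝ) * ((N : ℝ) - 1) * (A ^ (N - 1) * A ^ (N - 1) * B ^ 2)
        ≤ 2 * p * p2 := by
      have hmul := mul_le_mul_of_nonneg_left hPC (by linarith : (0:ℝ) ≤ 2 * p)
      calc (N : ℝ) * ((N : ℝ) - 1) * (A ^ (N - 1) * A ^ (N - 1) * B ^ 2)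
          = 2 * p * ((N.choose 2 : ℝ) * A ^ (N - 2) * B ^ 2) := by
            rw [hPA, ← hchoose, hpow]; ring
        _ ≤ 2 * p * p2 := hmul
    have hdid : d = p1 ^ 2 - 2 * p * p2 := by
      rw [hd_def, hp1_def, hp2_def]; ring
    have hkey : d ≤ (N : ℝ) * (A ^ (N - 1) * A ^ (N - 1) * B ^ 2) := by
      have hid : (N : ℝ) ^ 2 * (A ^ (N - 1) * A ^ (N - 1) * B ^ 2)
          - (N : ℝ) * ((N : ℝ) - 1) * (A ^ (N - 1) * A ^ (N - 1) * B ^ 2)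
          = (N : ℝ) * (A ^ (N - 1) * A ^ (N - 1) * B ^ 2) := by ring
      linarith
    have hfin := mul_le_mul_of_nonneg_left hkey (Nat.cast_nonneg (α := ℝ) N)
    have hNX : (N : ℝ) * ((N : ℝ) * (A ^ (N - 1) * A ^ (N - 1) * B ^ 2)) = p1 ^ 2 := by
      rw [hP1sq]; ring
    linarith
end

section
/- Let 0 < q < 1, r ≥ 0, p = 1 − q − r ≥ 0. Then the entropy of ρ_{q,r} equals H(ρ_{q,r}) = (q + r)( log(1/(1−q)) + (1/(1−q)) log(1/q) − log((q+r)/q) ) + p log(1/p), where p log(1/p) is interpreted as 0 when p = 0. -/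
/-- The entropy of `ρ_{q,r}` equals
`(q+r)(log(1/(1-q)) + (1/(1-q)) log(1/q) - log((q+r)/q)) + p log(1/p)`,
where `p log(1/p)` is interpreted as `0` when `p = 0`. -/
theorem entropy_rho (q r p : ℝ) (hq : 0 < q) (hq1 : q < 1) (hr : 0 ≤ r)
    (hp : p = 1 - q - r) (hp0 : 0 ≤ p) :
    -∑' k : ℕ, (if k = 0 then p else q ^ (k - 1) * r + q ^ k * p) *
        Real.log (if k = 0 then p else q ^ (k - 1) * r + q ^ k * p) =
      (q + r) * (Real.log (1 / (1 - q)) + 1 / (1 - q) * Real.log (1 / q) -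
        Real.log ((q + r) / q)) + p * Real.log (1 / p) := by
  have hq1' : (0:ℝ) < 1 - q := by linarith
  have hqr : 0 < q + r := by linarith
  set c : ℝ := (q + r) * (1 - q) with hcdef
  have hc0 : 0 < c := by positivity
  set f : ℕ → ℝ := fun k => (if k = 0 then p else q ^ (k - 1) * r + q ^ k * p) *
        Real.log (if k = 0 then p else q ^ (k - 1) * r + q ^ k * p) with hfdef
  have hkey : ∀ k : ℕ, f (k + 1)
      = (c * Real.log c) * q ^ k + (c * Real.log q) * ((k : ℝ) * q ^ k) := by
    intro k
    have h1 : q ^ (k + 1 - 1) * r + q ^ (k + 1) * p = c * q ^ k := by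
      simp only [Nat.add_sub_cancel, pow_succ]
      rw [hcdef, hp]; ring
    have h2 : Real.log (c * q ^ k) = Real.log c + (k : ℝ) * Real.log q := by
      rw [Real.log_mul hc0.ne' (pow_ne_zero k hq.ne'), Real.log_pow]
    simp only [hfdef, Nat.succ_ne_zero, if_false, h1, h2]
    ring
  have hs1 : Summable (fun k : ℕ => (c * Real.log c) * q ^ k) :=
    (summable_geometric_of_lt_one hq.le hq1).mul_left _
  have hs2' : Summable (fun k : ℕ => (k : ℝ) * q ^ k) := by
    have := summable_pow_mul_geometric_of_norm_lt_one (R := ℝ) 1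
      (r := q) (by rw [Real.norm_eq_abs, abs_of_pos hq]; exact hq1)
    simpa using this
  have hs2 : Summable (fun k : ℕ => (c * Real.log q) * ((k : ℝ) * q ^ k)) :=
    hs2'.mul_left _
  have hfs : Summable (fun k : ℕ => f (k + 1)) :=
    (hs1.add hs2).congr fun k => (hkey k).symm
  have hf : Summable f := (summable_nat_add_iff 1).mp hfs
  have hsplit : ∑' k : ℕ, f k = f 0 + ∑' k : ℕ, f (k + 1) := Summable.tsum_eq_zero_add hf
  have htail : ∑' k : ℕ, f (k + 1)
      = (c * Real.log c) * (1 - q)⁻¹ + (c * Real.log q) * (q / (1 - q) ^ 2) := by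
    rw [tsum_congr hkey, Summable.tsum_add hs1 hs2, tsum_mul_left, tsum_mul_left,
      tsum_geometric_of_lt_one hq.le hq1,
      tsum_coe_mul_geometric_of_norm_lt_one (𝕜 := ℝ)
        (by rw [Real.norm_eq_abs, abs_of_pos hq]; exact hq1)]
  have hf0 : f 0 = p * Real.log p := by simp [hfdef]
  have hlogc : Real.log c = Real.log (q + r) + Real.log (1 - q) :=
    Real.log_mul hqr.ne' hq1'.ne'
  rw [show (∑' k : ℕ, (if k = 0 then p else q ^ (k - 1) * r + q ^ k * p) *
        Real.log (if k = 0 then p else q ^ (k - 1) * r + q ^ k * p)) = ∑' k, f k from rfl,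
    hsplit, htail, hf0, hlogc, one_div (1 - q), one_div q, one_div p,
    Real.log_inv, Real.log_inv, Real.log_inv, Real.log_div hqr.ne' hq.ne']
  field_simp
  ring
end

section
/- Let 0 < q < 1, p = 1 − q, and 0 < t ≤ 1. The entropy of the negative binomial distribution ρ^{t*} with parameters t and p satisfies H(ρ^{t*}) ≤ t [ (1/p)(1 + 2 log(1/p)) + (q/p) log(1/t) ]. -/
open Real Finset

private lemma negbinom_prod_bounds (t : ℝ) (ht : 0 < t) (ht1 : t ≤ 1) (k : ℕ) :
    t * (Nat.factorial k : ℝ) ≤ ∏ j ∈ Finset.range (k+1), (t + (j:ℝ)) ∧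
    ∏ j ∈ Finset.range (k+1), (t + (j:ℝ)) ≤ t * (Nat.factorial (k+1) : ℝ) := by
  induction k with
  | zero => simp
  | succ n ih =>
    obtain ⟨h1, h2⟩ := ih
    have hprodpos : (0:ℝ) < ∏ j ∈ Finset.range (n+1), (t + (j:ℝ)) :=
      Finset.prod_pos (fun j _ => by positivity)
    rw [Finset.prod_range_succ]
    have hfac : (0:ℝ) < Nat.factorial n := by positivity
    constructor
    · have e : t * (Nat.factorial (n+1) : ℝ) = (t * Nat.factorial n) * ((n:ℝ)+1) := by
        push_cast [Nat.factorial_succ]; ring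
      rw [e]
      have := mul_le_mul h1 (by push_cast; linarith : ((n:ℝ)+1) ≤ t + ((n+1:ℕ):ℝ))
        (by positivity) (le_of_lt hprodpos)
      linarith
    · have e : t * (Nat.factorial (n+2) : ℝ) = (t * Nat.factorial (n+1)) * ((n:ℝ)+2) := by
        push_cast [Nat.factorial_succ]; ring
      rw [e]
      have := mul_le_mul h2 (by push_cast; linarith : t + ((n+1:ℕ):ℝ) ≤ (n:ℝ)+2)
        (by positivity) (by positivity : (0:ℝ) ≤ t * Nat.factorial (n+1))
      linarith

private lemma negbinom_final_arith (q t L T Nq : ℝ) (hq : 0 < q) (hq1 : q < 1) (ht : 0 < t)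
    (ht1 : t ≤ 1) (hL : 0 ≤ L) (hqNq : q*Nq ≤ 1-q) :
    t*L + (t*(T+t*L+L-1)*(q/(1-q)) + t*(Nq+(1-q))*(q/(1-q)^2)) ≤
      t*(1/(1-q)*(1+2*L) + q/(1-q)*T) := by
  have hp : 0 < 1-q := by linarith
  have hqt : 0 ≤ 1 - q*t := by nlinarith
  have h1 : 0 ≤ t*L*(1-q)*(1 - q*t) :=
    mul_nonneg (mul_nonneg (mul_nonneg ht.le hL) hp.le) hqt
  have h2 : t*(q*Nq) ≤ t*(1-q) := by nlinarith
  have hnum : 0 ≤ t*(1-q)*(1+2*L) + t*q*(1-q)*T -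
      (t*L*(1-q)^2 + t*(T+t*L+L-1)*(q*(1-q)) + t*(Nq+(1-q))*q) := by nlinarith [h1, h2]
  have expand : t*(1/(1-q)*(1+2*L) + q/(1-q)*T) -
      (t*L + (t*(T+t*L+L-1)*(q/(1-q)) + t*(Nq+(1-q))*(q/(1-q)^2)))
      = (t*(1-q)*(1+2*L) + t*q*(1-q)*T -
        (t*L*(1-q)^2 + t*(T+t*L+L-1)*(q*(1-q)) + t*(Nq+(1-q))*q)) / (1-q)^2 := by
    field_simp
    ring
  have := div_nonneg hnum (by positivity : (0:ℝ) ≤ (1-q)^2)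
  linarith [expand ▸ this]

/-- The entropy of the negative binomial distribution `ρ^{t*}` with parameters
`t ∈ (0,1]` and `p = 1 - q` satisfies
`H(ρ^{t*}) ≤ t[(1/p)(1 + 2 log(1/p)) + (q/p) log(1/t)]`. -/
theorem negbinom_entropy_bound (q t : ℝ) (hq : 0 < q) (hq1 : q < 1)
    (ht : 0 < t) (ht1 : t ≤ 1) :
    -∑' k : ℕ,
        ((1 - q) ^ t * q ^ k * (∏ j ∈ Finset.range k, (t + (j : ℝ))) / (Nat.factorial k : ℝ)) *
          Real.log
            ((1 - q) ^ t * q ^ k * (∏ j ∈ Finset.range k, (t + (j : ℝ))) /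
              (Nat.factorial k : ℝ)) ≤
      t * (1 / (1 - q) * (1 + 2 * Real.log (1 / (1 - q))) +
        q / (1 - q) * Real.log (1 / t)) := by
  have hp : 0 < 1 - q := by linarith
  have hp1 : 1 - q < 1 := by linarith
  set f : ℕ → ℝ := fun k =>
    (1 - q) ^ t * q ^ k * (∏ j ∈ Finset.range k, (t + (j : ℝ))) / (Nat.factorial k : ℝ)
    with hf_def
  set L : ℝ := -Real.log (1 - q) with hL_def
  set T : ℝ := -Real.log t with hT_def
  set Nq : ℝ := -Real.log q with hNq_def
  set A : ℝ := T + t*L + L - 1 with hA_def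
  set B : ℝ := Nq + (1 - q) with hB_def
  have hL : 0 ≤ L := by
    rw [hL_def, neg_nonneg]; exact Real.log_nonpos hp.le hp1.le
  have hT : 0 ≤ T := by
    rw [hT_def, neg_nonneg]; exact Real.log_nonpos ht.le ht1
  have hqNq : q * Nq ≤ 1 - q := by
    have h1 := Real.log_le_sub_one_of_pos (show (0:ℝ) < 1/q by positivity)
    rw [one_div, Real.log_inv] at h1
    have h4 : q * (-Real.log q) ≤ q * (q⁻¹ - 1) := mul_le_mul_of_nonneg_left h1 hq.le
    have h5 : q * (q⁻¹ - 1) = 1 - q := by field_simp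
    rw [hNq_def]
    linarith
  have hrpos : (0:ℝ) < (1 - q) ^ t := Real.rpow_pos_of_pos hp t
  have hrle1 : (1 - q) ^ t ≤ 1 := Real.rpow_le_one hp.le hp1.le ht.le
  have hfpos : ∀ k, 0 < f k := by
    intro k
    have h1 : (0:ℝ) < ∏ j ∈ Finset.range k, (t + (j:ℝ)) :=
      Finset.prod_pos (fun j _ => by positivity)
    have hfac : (0:ℝ) < Nat.factorial k := by positivity
    rw [hf_def]
    positivity
  -- upper bound f (k+1) ≤ t * q^(k+1)
  have hub : ∀ k : ℕ, f (k+1) ≤ t * q ^ (k+1) := by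
    intro k
    have h2 := (negbinom_prod_bounds t ht ht1 k).2
    have hfac : (0:ℝ) < Nat.factorial (k+1) := by positivity
    rw [hf_def]
    rw [div_le_iff₀ hfac]
    calc (1-q) ^ t * q ^ (k+1) * (∏ j ∈ Finset.range (k+1), (t + (j:ℝ)))
        ≤ 1 * q ^ (k+1) * (t * Nat.factorial (k+1)) := by
          apply mul_le_mul (by nlinarith [pow_pos hq (k+1)]) h2
            (Finset.prod_pos (fun j _ => by positivity)).le (by positivity)
      _ = t * q ^ (k+1) * Nat.factorial (k+1) := by ring
  -- lower bound t * (1-q)^t * q^(k+1) / (k+1) ≤ f (k+1)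
  have hlb : ∀ k : ℕ, t * (1-q) ^ t * q ^ (k+1) / ((k:ℝ)+1) ≤ f (k+1) := by
    intro k
    have h1 := (negbinom_prod_bounds t ht ht1 k).1
    have hfac : (0:ℝ) < Nat.factorial (k+1) := by positivity
    rw [hf_def]
    rw [div_le_div_iff₀ (by positivity) hfac]
    have hfs : (Nat.factorial (k+1) : ℝ) = ((k:ℝ)+1) * Nat.factorial k := by
      push_cast [Nat.factorial_succ]; ring
    calc t * (1-q) ^ t * q ^ (k+1) * Nat.factorial (k+1)
        = ((1-q) ^ t * q ^ (k+1)) * (t * Nat.factorial k) * ((k:ℝ)+1) := by rw [hfs]; ring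
      _ ≤ ((1-q) ^ t * q ^ (k+1)) * (∏ j ∈ Finset.range (k+1), (t + (j:ℝ))) * ((k:ℝ)+1) := by
          have := mul_le_mul_of_nonneg_left h1
            (by positivity : (0:ℝ) ≤ (1-q) ^ t * q ^ (k+1))
          nlinarith
      _ = (1-q) ^ t * q ^ (k+1) * (∏ j ∈ Finset.range (k+1), (t + (j:ℝ))) * ((k:ℝ)+1) := by ring
  -- log bounds
  have hloglb : ∀ k : ℕ, -Real.log (f (k+1)) ≤ A + B * ((k:ℝ)+1) := by
    intro k
    have hlogk : Real.log ((k:ℝ)+1) ≤ (1-q)*((k:ℝ)+1) + L - 1 := by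
      have h := Real.log_le_sub_one_of_pos
        (show (0:ℝ) < (1-q)*((k:ℝ)+1) by positivity)
      rw [Real.log_mul (by positivity) (by positivity)] at h
      rw [hL_def]; linarith
    have hmono : Real.log (t * (1-q) ^ t * q ^ (k+1) / ((k:ℝ)+1)) ≤ Real.log (f (k+1)) :=
      Real.log_le_log (by positivity) (hlb k)
    have hcalc : Real.log (t * (1-q) ^ t * q ^ (k+1) / ((k:ℝ)+1))
        = Real.log t + t * Real.log (1-q) + ((k:ℝ)+1) * Real.log q - Real.log ((k:ℝ)+1) := by
      rw [Real.log_div (by positivity) (by positivity),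
        Real.log_mul (by positivity) (by positivity),
        Real.log_mul (by positivity) (by positivity),
        Real.log_rpow hp, Real.log_pow]
      push_cast
      ring
    rw [hA_def, hB_def, hT_def, hL_def, hNq_def]
    rw [hcalc] at hmono
    nlinarith [hmono, hlogk]
  have hlognn : ∀ k : ℕ, 0 ≤ -Real.log (f (k+1)) := by
    intro k
    rw [neg_nonneg]
    apply Real.log_nonpos (hfpos (k+1)).le
    calc f (k+1) ≤ t * q ^ (k+1) := hub k
      _ ≤ 1 * 1 := by
          apply mul_le_mul ht1 (pow_le_one₀ hq.le hq1.le) (by positivity) one_pos.le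
      _ = 1 := by ring
  -- per-term bound
  set g : ℕ → ℝ := fun k => t * q ^ (k+1) * (A + B * ((k:ℝ)+1)) with hg_def
  have hterm : ∀ k : ℕ, -(f (k+1) * Real.log (f (k+1))) ≤ g k := by
    intro k
    have : -(f (k+1) * Real.log (f (k+1))) = f (k+1) * (-Real.log (f (k+1))) := by ring
    rw [this, hg_def]
    exact mul_le_mul (hub k) (hloglb k) (hlognn k) (by positivity)
  -- summability
  have hgeo : Summable (fun k:ℕ => q^k) := summable_geometric_of_lt_one hq.le hq1
  have hnorm : ‖q‖ < 1 := by rw [Real.norm_eq_abs, abs_lt]; constructor <;> linarith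
  have hn : Summable (fun n:ℕ => (n:ℝ) * q^n) := by
    simpa using summable_pow_mul_geometric_of_norm_lt_one 1 hnorm
  have hs1 : Summable (fun k:ℕ => q^(k+1)) := (summable_nat_add_iff 1).2 hgeo
  have hs2 : Summable (fun k:ℕ => ((k:ℝ)+1) * q^(k+1)) := by
    have h := (summable_nat_add_iff (f := fun n:ℕ => (n:ℝ)*q^n) 1).2 hn
    apply h.congr; intro n; push_cast; ring
  have hS1 : (∑' k : ℕ, q^(k+1)) = q / (1-q) := by
    have e1 : (∑' k : ℕ, q^(k+1)) = ∑' k : ℕ, q * q^k := by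
      apply tsum_congr; intro k; ring
    rw [e1, tsum_mul_left, tsum_geometric_of_lt_one hq.le hq1]
    field_simp
  have hS2 : (∑' k : ℕ, ((k:ℝ)+1) * q^(k+1)) = q / (1-q)^2 := by
    have h0 := tsum_coe_mul_geometric_of_norm_lt_one hnorm
    rw [Summable.tsum_eq_zero_add hn] at h0
    simp only [Nat.cast_zero, zero_mul, pow_zero, zero_add] at h0
    rw [← h0]
    apply tsum_congr; intro n; push_cast; ring
  have hgsum : Summable g := by
    apply Summable.congr (((hs1.mul_left (t*A)).add (hs2.mul_left (t*B))))
    intro k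
    rw [hg_def]
    ring
  have hgtsum : (∑' k, g k) = t*A*(q/(1-q)) + t*B*(q/(1-q)^2) := by
    have e : ∀ k : ℕ, g k = (t*A)*q^(k+1) + (t*B)*(((k:ℝ)+1)*q^(k+1)) := by
      intro k; rw [hg_def]; ring
    rw [tsum_congr e, Summable.tsum_add (hs1.mul_left (t*A)) (hs2.mul_left (t*B)),
      tsum_mul_left, tsum_mul_left, hS1, hS2]
  set v : ℕ → ℝ := fun k => -(f k * Real.log (f k)) with hv_def
  have hvnn : ∀ k, 0 ≤ v k := by
    intro k
    rw [hv_def]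
    simp only [neg_nonneg]
    apply mul_nonpos_of_nonneg_of_nonpos (hfpos k).le
    apply Real.log_nonpos (hfpos k).le
    match k with
    | 0 => simp [hf_def]; exact hrle1
    | (k+1) =>
      calc f (k+1) ≤ t * q ^ (k+1) := hub k
        _ ≤ 1 * 1 := by
            apply mul_le_mul ht1 (pow_le_one₀ hq.le hq1.le) (by positivity) one_pos.le
        _ = 1 := by ring
  have hvs' : Summable (fun k => v (k+1)) :=
    Summable.of_nonneg_of_le (fun k => hvnn (k+1)) (fun k => hterm k) hgsum
  have hvs : Summable v := (summable_nat_add_iff 1).1 hvs'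
  have hus : Summable (fun k => f k * Real.log (f k)) := by
    have := hvs.neg
    apply this.congr
    intro k
    rw [hv_def]
    ring
  -- k = 0 term
  have hv0 : v 0 ≤ t * L := by
    have hf0 : f 0 = (1-q) ^ t := by simp [hf_def]
    rw [hv_def]
    simp only [hf0]
    rw [Real.log_rpow hp, hL_def]
    have hL' : 0 ≤ -Real.log (1-q) := neg_nonneg.2 (Real.log_nonpos hp.le hp1.le)
    nlinarith [mul_nonneg (mul_nonneg ht.le hL') (sub_nonneg.2 hrle1)]
  -- assemble
  have hmain : -(∑' k, f k * Real.log (f k)) = ∑' k, v k := by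
    rw [hv_def, tsum_neg]
  rw [hmain]
  rw [Summable.tsum_eq_zero_add hvs]
  have htail : (∑' k, v (k+1)) ≤ ∑' k, g k := Summable.tsum_le_tsum hterm hvs' hgsum
  have hfinal := negbinom_final_arith q t L T Nq hq hq1 ht ht1 hL hqNq
  have hlog1 : Real.log (1/(1-q)) = L := by rw [one_div, Real.log_inv, hL_def]
  have hlog2 : Real.log (1/t) = T := by rw [one_div, Real.log_inv, hT_def]
  rw [hlog1, hlog2]
  calc v 0 + ∑' k, v (k+1) ≤ t*L + (t*A*(q/(1-q)) + t*B*(q/(1-q)^2)) := by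
        rw [← hgtsum]; exact add_le_add hv0 htail
    _ ≤ t*(1/(1-q)*(1+2*L) + q/(1-q)*T) := by
        rw [hA_def, hB_def] at *
        exact hfinal
end

section
/- Let c > 1 be such that c^k is rational for some k ∈ ℕ; let k₀ be the smallest such k, write c^{k₀} = α/β in lowest terms with α, β ∈ ℕ, and let f be the largest t ∈ ℕ₀ with 2^t | β. Then for every even m ∈ ℕ, the set G_m = {(n', m') ∈ ℕ₀ × ℕ : c^{−n'} m' = m, m' odd} contains at most one element; moreover if G_m ≠ ∅ for some even m, then f ≥ 1. -/
lemma G_aux (c : ℝ) (hc : 1 < c) (k₀ : ℕ) (hk₀ : 0 < k₀)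
    (hmin : ∀ k : ℕ, 0 < k → (∃ s : ℚ, c ^ k = (s : ℝ)) → k₀ ≤ k)
    (α β : ℕ) (hα : 0 < α) (hβ : 0 < β) (hcop : Nat.Coprime α β)
    (hc0 : c ^ k₀ = (α : ℝ) / (β : ℝ))
    (f : ℕ) (hf : 2 ^ f ∣ β) (hf2 : ¬ 2 ^ (f + 1) ∣ β)
    (m n' m' : ℕ) (hm : Even m) (hm0 : 0 < m)
    (h : c ^ (-(n' : ℤ)) * (m' : ℝ) = (m : ℝ)) (hodd : Odd m') :
    1 ≤ f ∧ n' = k₀ * (m.factorization 2 / f) := by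
  have hcpos : (0:ℝ) < c := lt_trans one_pos hc
  have hcne : c ≠ 0 := ne_of_gt hcpos
  have hm'0 : 0 < m' := hodd.pos
  have heq : (m' : ℝ) = m * c ^ n' := by
    rw [zpow_neg, zpow_natCast] at h
    field_simp at h
    linarith [h]
  have hq' : c ^ n' = (((m' : ℚ) / (m : ℚ) : ℚ) : ℝ) := by
    push_cast
    rw [eq_div_iff (by exact_mod_cast hm0.ne')]
    linarith [heq]
  have hq : c ^ k₀ = (((α : ℚ) / (β : ℚ) : ℚ) : ℝ) := by
    push_cast; exact hc0
  -- k₀ ∣ n'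
  have hdvd : k₀ ∣ n' := by
    set d := Nat.gcd n' k₀ with hd
    have hd0 : 0 < d := Nat.gcd_pos_of_pos_right _ hk₀
    have hdk : d ∣ k₀ := Nat.gcd_dvd_right _ _
    have hbez : (d : ℤ) = (n' : ℤ) * Nat.gcdA n' k₀ + (k₀ : ℤ) * Nat.gcdB n' k₀ :=
      Nat.gcd_eq_gcd_ab n' k₀
    have hcd : c ^ d = ((((m' : ℚ) / m) ^ Nat.gcdA n' k₀ *
        ((α : ℚ) / β) ^ Nat.gcdB n' k₀ : ℚ) : ℝ) := by
      have : c ^ (d : ℤ) = (c ^ (n' : ℤ)) ^ Nat.gcdA n' k₀ *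
          (c ^ (k₀ : ℤ)) ^ Nat.gcdB n' k₀ := by
        rw [hbez, zpow_add₀ hcne, zpow_mul, zpow_mul]
      rw [zpow_natCast, zpow_natCast, zpow_natCast] at this
      rw [this, hq', hq]
      push_cast
      ring
    have hle : k₀ ≤ d := hmin d hd0 ⟨_, hcd⟩
    have : d = k₀ := le_antisymm (Nat.le_of_dvd hk₀ hdk) hle
    rw [← this]
    exact Nat.gcd_dvd_left _ _
  obtain ⟨l, rfl⟩ := hdvd
  have hnat : m' * β ^ l = m * α ^ l := by
    have hr : (m' : ℝ) * (β : ℝ) ^ l = (m : ℝ) * (α : ℝ) ^ l := by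
      have hck : c ^ (k₀ * l) = ((α : ℝ) / β) ^ l := by
        rw [pow_mul, hc0]
      have hβne : ((β : ℝ)) ^ l ≠ 0 := by positivity
      rw [heq, hck]
      field_simp
      rw [div_pow, div_mul_cancel₀ _ hβne]
    exact_mod_cast hr
  have hβf : β.factorization 2 = f := by
    have h1 : f ≤ β.factorization 2 :=
      (Nat.Prime.pow_dvd_iff_le_factorization Nat.prime_two hβ.ne').mp hf
    have h2 : ¬ (f + 1 ≤ β.factorization 2) := fun hle =>
      hf2 ((Nat.Prime.pow_dvd_iff_le_factorization Nat.prime_two hβ.ne').mpr hle)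
    omega
  have hm'f : m'.factorization 2 = 0 :=
    Nat.factorization_eq_zero_of_not_dvd (fun h2 => by
      have := Nat.odd_iff.mp hodd
      omega)
  have hm2 : 1 ≤ m.factorization 2 :=
    (Nat.Prime.pow_dvd_iff_le_factorization Nat.prime_two hm0.ne').mp
      (by simpa [pow_one] using hm.two_dvd)
  have hkey : l * f = m.factorization 2 + l * α.factorization 2 := by
    have h1 := congrArg (fun nn : ℕ => nn.factorization 2) hnat
    simp only [Nat.factorization_mul hm'0.ne' (pow_ne_zero l hβ.ne'),
      Nat.factorization_mul hm0.ne' (pow_ne_zero l hα.ne'),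
      Nat.factorization_pow, Finsupp.add_apply, Finsupp.smul_apply,
      smul_eq_mul, hm'f, hβf] at h1
    omega
  have hf1 : 1 ≤ f := by
    by_contra hcon
    have : f = 0 := by omega
    subst this
    -- l * 0 = v₂ m + l * v₂ α ≥ 1, contradiction
    omega
  have hα2 : α.factorization 2 = 0 := by
    apply Nat.factorization_eq_zero_of_not_dvd
    intro h2α
    have h2β : 2 ∣ β := dvd_trans (dvd_pow_self 2 (by omega : f ≠ 0)) hf
    have := Nat.Coprime.eq_one_of_dvd (Nat.Coprime.coprime_dvd_left h2α hcop) h2β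
    omega
  refine ⟨hf1, ?_⟩
  rw [hα2, mul_zero, add_zero] at hkey
  rw [← hkey, Nat.mul_div_cancel _ (by omega)]

/-- Let `c > 1` with `c^{k₀}` rational for a minimal `k₀ ≥ 1`, write
`c^{k₀} = α/β` in lowest terms and let `f` be the exact power of `2` dividing `β`.
Then for every even `m ≥ 1` the set
`G_m = {(n', m') : c^{-n'} m' = m, m' odd}` has at most one element, and if some
`G_m` (with `m` even) is nonempty, then `f ≥ 1`. -/
theorem G_m_subsingleton (c : ℝ) (hc : 1 < c) (k₀ : ℕ) (hk₀ : 0 < k₀)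
    (hrat : ∃ s : ℚ, c ^ k₀ = (s : ℝ))
    (hmin : ∀ k : ℕ, 0 < k → (∃ s : ℚ, c ^ k = (s : ℝ)) → k₀ ≤ k)
    (α β : ℕ) (hα : 0 < α) (hβ : 0 < β) (hcop : Nat.Coprime α β)
    (hc0 : c ^ k₀ = (α : ℝ) / (β : ℝ))
    (f : ℕ) (hf : 2 ^ f ∣ β) (hf2 : ¬ 2 ^ (f + 1) ∣ β) :
    (∀ m : ℕ, Even m → 0 < m →
      Set.Subsingleton {x : ℕ × ℕ | c ^ (-(x.1 : ℤ)) * (x.2 : ℝ) = (m : ℝ) ∧ Odd x.2}) ∧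
    ((∃ m : ℕ, Even m ∧ 0 < m ∧
      Set.Nonempty {x : ℕ × ℕ | c ^ (-(x.1 : ℤ)) * (x.2 : ℝ) = (m : ℝ) ∧ Odd x.2}) →
      1 ≤ f) := by
  have hcne : c ≠ 0 := ne_of_gt (lt_trans one_pos hc)
  constructor
  · intro m hm hm0 x hx y hy
    obtain ⟨hx1, hx2⟩ := hx
    obtain ⟨hy1, hy2⟩ := hy
    obtain ⟨_, hnx⟩ := G_aux c hc k₀ hk₀ hmin α β hα hβ hcop hc0 f hf hf2 m x.1 x.2 hm hm0 hx1 hx2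
    obtain ⟨_, hny⟩ := G_aux c hc k₀ hk₀ hmin α β hα hβ hcop hc0 f hf hf2 m y.1 y.2 hm hm0 hy1 hy2
    have hn : x.1 = y.1 := hnx.trans hny.symm
    have h2 : (x.2 : ℝ) = (y.2 : ℝ) := by
      rw [hn] at hx1
      have := hx1.trans hy1.symm
      exact mul_left_cancel₀ (zpow_ne_zero _ hcne) this
    exact Prod.ext hn (Nat.cast_injective h2)
  · rintro ⟨m, hm, hm0, ⟨x, hx1, hx2⟩⟩
    exact (G_aux c hc k₀ hk₀ hmin α β hα hβ hcop hc0 f hf hf2 m x.1 x.2 hm hm0 hx1 hx2).1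
end
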